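/- Let F be a real symplectic 2n×2n matrix with 1 as an eigenvalue of algebraic multiplicity exactly 2, E₁ its generalized eigenspace for eigenvalue 1, and V the σ-orthogonal complement of E₁. Then ℝ^{2n} = E₁ ⊕ V and the restriction P of F to V does not have 1 as an eigenvalue. -/

import Mathlib

open Matrix

noncomputable section

/-- The standard symplectic matrix J = [[0, I], [-I, 0]]. -/
def J (n : ℕ) : Matrix (Fin n ⊕ Fin n) (Fin n ⊕ Fin n) ℝ :=
  Matrix.fromBlocks 0 1 (-1) 0

private lemma aux_dot {n : ℕ} (A M : Matrix (Fin n ⊕ Fin n) (Fin n ⊕ Fin n) ℝ)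
    (x y : Fin n ⊕ Fin n → ℝ) :
    (A *ᵥ x) ⬝ᵥ (M *ᵥ (A *ᵥ y)) = x ⬝ᵥ ((Aᵀ * M * A) *ᵥ y) := by
  rw [Matrix.dotProduct_mulVec, ← Matrix.vecMul_transpose, Matrix.vecMul_vecMul,
    ← Matrix.dotProduct_mulVec]
  simp [Matrix.mulVec_mulVec, Matrix.mul_assoc]

theorem stmt_9 (n : ℕ) (F : Matrix (Fin n ⊕ Fin n) (Fin n ⊕ Fin n) ℝ)
    (hF : Fᵀ * J n * F = J n)
    (E₁ V : Submodule ℝ (Fin n ⊕ Fin n → ℝ))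
    (hE₁ : E₁ = LinearMap.ker
      (((Matrix.toLin' F - LinearMap.id : Module.End ℝ (Fin n ⊕ Fin n → ℝ)))
        ^ (2 * n)))
    (hdim : Module.finrank ℝ E₁ = 2)
    (hV : V = (Matrix.toBilin' (J n)).orthogonal E₁) :
    IsCompl E₁ V ∧
      ∀ v ∈ V, Matrix.toLin' F v = v → v = 0 := by
  classical
  set σ : LinearMap.BilinForm ℝ (Fin n ⊕ Fin n → ℝ) := Matrix.toBilin' (J n) with hσdef
  set f : Module.End ℝ (Fin n ⊕ Fin n → ℝ) := Matrix.toLin' F with hfdef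
  set g : Module.End ℝ (Fin n ⊕ Fin n → ℝ) :=
    Matrix.toLin' F - LinearMap.id with hgdef
  have hg1 : g = f - 1 := rfl
  -- finrank of the whole space
  have hfr : Module.finrank ℝ (Fin n ⊕ Fin n → ℝ) = 2 * n := by
    simp [Module.finrank_fintype_fun_eq_card, two_mul]
  -- n is positive
  have hn : 0 < n := by
    rcases Nat.eq_zero_or_pos n with rfl | hn
    · have h1 := Submodule.finrank_le E₁
      rw [hfr, hdim] at h1
      omega
    · exact hn
  -- J facts
  have hJJ : J n * J n = -1 := by
    rw [show (-1 : Matrix (Fin n ⊕ Fin n) (Fin n ⊕ Fin n) ℝ) =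
        Matrix.fromBlocks (-1) 0 0 (-1) by rw [← Matrix.fromBlocks_one, Matrix.fromBlocks_neg, neg_zero]]
    simp [_root_.J, Matrix.fromBlocks_multiply]
  have hJT : (J n)ᵀ = -(J n) := by
    simp only [_root_.J, Matrix.fromBlocks_transpose, Matrix.fromBlocks_neg, Matrix.transpose_zero,
      Matrix.transpose_one, Matrix.transpose_neg, neg_neg, neg_zero]
  letI : Invertible (J n) :=
    ⟨-(J n), by rw [neg_mul, hJJ, neg_neg], by rw [mul_neg, hJJ, neg_neg]⟩
  letI : Invertible F := invertibleOfLeftInverse F (-(J n) * Fᵀ * J n) (by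
    rw [Matrix.mul_assoc, Matrix.mul_assoc, ← Matrix.mul_assoc Fᵀ, hF, neg_mul, hJJ, neg_neg])
  -- skew-symmetry, reflexivity, nondegeneracy of σ
  have hskew : ∀ x y, σ y x = -(σ x y) := by
    intro x y
    simp only [hσdef, Matrix.toBilin'_apply']
    rw [Matrix.dotProduct_mulVec, dotProduct_comm, ← Matrix.mulVec_transpose, hJT,
      Matrix.neg_mulVec, dotProduct_neg]
  have hrefl : σ.IsRefl := fun x y h => by rw [hskew, h, neg_zero]
  have hnondeg : σ.Nondegenerate := by
    rw [hσdef]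
    exact Matrix.Nondegenerate.toBilin'
      (Matrix.nondegenerate_iff_det_ne_zero.mpr (Matrix.isUnit_det_of_invertible _).ne_zero)
  -- symplectic invariance of σ
  have hσinv : ∀ x y, σ (f x) (f y) = σ x y := by
    intro x y
    simp only [hσdef, hfdef, Matrix.toLin'_apply, Matrix.toBilin'_apply']
    rw [aux_dot, hF]
  -- f is invertible
  have hmul : ∀ (A B : Matrix (Fin n ⊕ Fin n) (Fin n ⊕ Fin n) ℝ),
      Matrix.toLin' A * Matrix.toLin' B = Matrix.toLin' (A * B) := by
    intro A B
    rw [Matrix.toLin'_mul]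
    rfl
  have hone : (Matrix.toLin' (1 : Matrix (Fin n ⊕ Fin n) (Fin n ⊕ Fin n) ℝ)) =
      (1 : Module.End ℝ (Fin n ⊕ Fin n → ℝ)) := by
    rw [Matrix.toLin'_one]; rfl
  letI : Invertible f :=
    ⟨Matrix.toLin' (⅟F), by rw [hfdef, hmul, invOf_mul_self, hone],
      by rw [hfdef, hmul, mul_invOf_self, hone]⟩
  have hcommgf : Commute g f := by
    rw [hg1]; exact (Commute.refl f).sub_left (Commute.one_left f)
  have hcomm : Commute g (⅟f) := hcommgf.invOf_right
  set h : Module.End ℝ (Fin n ⊕ Fin n → ℝ) := g * ⅟f with hhdef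
  -- the key adjoint-type identity
  have hstep0 : ∀ x y, σ (f x) (g y) = -(σ (g x) y) := by
    intro x y
    have B : g y = f y - y := by simp [hg1]
    have C : g x = f x - x := by simp [hg1]
    rw [B, C]
    simp only [map_sub, LinearMap.sub_apply]
    rw [hσinv]
    ring
  have hstep : ∀ x y, σ x (g y) = -(σ (h x) y) := by
    intro x y
    have hfx : f (⅟f x) = x := by
      rw [← Module.End.mul_apply, mul_invOf_self, Module.End.one_apply]
    have := hstep0 (⅟f x) y
    rw [hfx, ← Module.End.mul_apply g, ← hhdef] at this
    exact this
  -- iterate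
  have hiter : ∀ (k : ℕ) (x y), σ x ((g ^ k) y) = (-1 : ℝ) ^ k * σ ((h ^ k) x) y := by
    intro k
    induction k with
    | zero => simp
    | succ k ih =>
      intro x y
      rw [pow_succ g, Module.End.mul_apply, ih, hstep, pow_succ' h, pow_succ]
      simp only [hhdef, Module.End.mul_apply]
      ring
  -- Fitting decomposition at a large exponent
  obtain ⟨N, hN⟩ := Filter.eventually_atTop.mp (LinearMap.eventually_isCompl_ker_pow_range_pow g)
  set k : ℕ := max (2 * n) N with hkdef
  have hcompl := hN k (le_max_right _ _)
  have hker : LinearMap.ker (g ^ k) = E₁ := by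
    rw [hE₁,
      Module.End.ker_pow_eq_ker_pow_finrank_of_le (by rw [hfr]; exact le_max_left _ _),
      Module.End.ker_pow_eq_ker_pow_finrank_of_le hfr.le]
  -- orthogonality : range (g^k) ⊆ V
  have hortho : ∀ u ∈ LinearMap.ker (g ^ k), ∀ w ∈ LinearMap.range (g ^ k), σ u w = 0 := by
    intro u hu w hw
    obtain ⟨z, rfl⟩ := hw
    rw [hiter]
    have hhk : (h ^ k) u = 0 := by
      have : h ^ k = (⅟f) ^ k * g ^ k := by
        rw [hhdef, hcomm.eq, (hcomm.symm).mul_pow]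
      rw [this, Module.End.mul_apply, LinearMap.mem_ker.mp hu, map_zero]
    rw [hhk, map_zero, LinearMap.zero_apply, mul_zero]
  have hrange_le : LinearMap.range (g ^ k) ≤ V := by
    rw [hV]
    intro w hw
    rw [LinearMap.BilinForm.mem_orthogonal_iff]
    intro u hu
    exact hortho u (by rw [hker]; exact hu) w hw
  -- dimensions
  have hdimV : Module.finrank ℝ V = 2 * n - 2 := by
    rw [hV, LinearMap.BilinForm.finrank_orthogonal hnondeg, hfr, hdim]
  have hdimW : Module.finrank ℝ (LinearMap.range (g ^ k)) = 2 * n - 2 := by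
    have h1 := LinearMap.finrank_range_add_finrank_ker (g ^ k)
    rw [hker, hdim, hfr] at h1
    omega
  have hWV : LinearMap.range (g ^ k) = V :=
    Submodule.eq_of_le_of_finrank_le hrange_le (by rw [hdimV, hdimW])
  rw [hker, hWV] at hcompl
  refine ⟨hcompl, ?_⟩
  intro v hvV hfv
  have hgv : g v = 0 := by
    rw [hg1]
    simp only [LinearMap.sub_apply, Module.End.one_apply]
    rw [hfv, sub_self]
  have hvE : v ∈ E₁ := by
    rw [← hker]
    obtain ⟨k', hk'⟩ : ∃ k', k = k' + 1 := ⟨k - 1, by have := le_max_left (2 * n) N; omega⟩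
    rw [LinearMap.mem_ker, hk', pow_succ, Module.End.mul_apply, hgv, map_zero]
  exact Submodule.disjoint_def.mp hcompl.disjoint v hvE hvV
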